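/- Let R be a domain (not necessarily commutative) and let a, b be nonzero elements of R such that a·R + b·R = R (i.e., a·x + b·y = 1 for some x, y ∈ R). Then the following are equivalent: (i) there exist an integer n > 0 and elements a₁, …, aₙ, b₁, …, bₙ, c₁, …, cₙ, d₁, …, dₙ of R with a₁ = c₁ = 1, b₁ = 0, cₙ = a, dₙ = b, cᵢ·aᵢ + dᵢ·bᵢ = 1 for 1 ≤ i ≤ n, and cᵢ·aᵢ₊₁ + dᵢ·bᵢ₊₁ = 1 for 1 ≤ i ≤ n−1; (ii) there exist an integer n > 0 and elements aᵢ, bᵢ, cᵢ, dᵢ ∈ R (1 ≤ i ≤ n) such that the 2×2 matrix with rows (a, b) and (0, 0) equals the product E₁ ⋯ Eₙ, where each Eᵢ is the idempotent matrix (Eᵢ² = Eᵢ) with rows (aᵢ·cᵢ, aᵢ·dᵢ) and (bᵢ·cᵢ, bᵢ·dᵢ). -/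

import Mathlib

private lemma inv_comm_of_domain {R : Type*} [Ring R] [IsDomain R] {x y : R}
    (h : x * y = 1) : y * x = 1 := by
  have h2 : (y * x) * ((y * x) - 1) = 0 := by
    have h1 : y * (x * y) * x - y * x = 0 := by rw [h]; noncomm_ring
    calc (y * x) * ((y * x) - 1) = y * (x * y) * x - y * x := by noncomm_ring
    _ = 0 := h1
  rcases mul_eq_zero.1 h2 with h3 | h3
  · exfalso
    have h4 : (1 : R) = 0 := by
      calc (1:R) = (x*y) * (x*y) := by rw [h, one_mul]
      _ = x * (y * x) * y := by noncomm_ring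
      _ = 0 := by rw [h3]; noncomm_ring
    exact one_ne_zero h4
  · exact sub_eq_zero.1 h3

private lemma prodE_formula {R : Type*} [Ring R] (A B C D : ℕ → R) (n : ℕ) :
    ((List.range (n+1)).map
      (fun i => (!![A i * C i, A i * D i; B i * C i, B i * D i] :
        Matrix (Fin 2) (Fin 2) R))).prod =
      !![A 0 * ((List.range n).map (fun i => C i * A (i+1) + D i * B (i+1))).prod * C n,
         A 0 * ((List.range n).map (fun i => C i * A (i+1) + D i * B (i+1))).prod * D n;
         B 0 * ((List.range n).map (fun i => C i * A (i+1) + D i * B (i+1))).prod * C n,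
         B 0 * ((List.range n).map (fun i => C i * A (i+1) + D i * B (i+1))).prod * D n] := by
  induction n with
  | zero => simp [List.range_succ]
  | succ n ih =>
    rw [List.range_succ (n := n+1), List.map_append, List.prod_append, ih,
      List.range_succ (n := n), List.map_append, List.prod_append]
    simp only [List.map_cons, List.map_nil, List.prod_cons, List.prod_nil, mul_one]
    rw [Matrix.mul_fin_two]
    congr 1 <;> noncomm_ring

private lemma entry_helper {R : Type*} [Ring R] {c a d b : R} (h : c*a + d*b = 1)
    (p q : R) : p*c*(a*q) + p*d*(b*q) = p*q := by
  calc p*c*(a*q) + p*d*(b*q) = p*((c*a+d*b)*q) := by noncomm_ring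
  _ = p*q := by rw [h, one_mul]


/-- Over a domain `R`, for nonzero `a, b` with `a·R + b·R = R`, the matrix
`!![a, b; 0, 0]` admits a factorization into idempotent matrices of the special
form `(aᵢ, bᵢ)ᵗ (cᵢ, dᵢ)` if and only if a certain family of equations admits a
solution. -/
theorem prod_idempotents_iff_exists_chain
    (R : Type*) [Ring R] [IsDomain R] (a b : R) (ha : a ≠ 0) (hb : b ≠ 0)
    (hcomax : ∃ x y : R, a * x + b * y = 1) :
    (∃ n : ℕ, 0 < n ∧ ∃ A B C D : ℕ → R,
      A 0 = 1 ∧ C 0 = 1 ∧ B 0 = 0 ∧ C (n - 1) = a ∧ D (n - 1) = b ∧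
      (∀ i < n, C i * A i + D i * B i = 1) ∧
      (∀ i, i + 1 < n → C i * A (i + 1) + D i * B (i + 1) = 1)) ↔
    (∃ n : ℕ, 0 < n ∧ ∃ A B C D : ℕ → R,
      (∀ i < n,
        (!![A i * C i, A i * D i; B i * C i, B i * D i] : Matrix (Fin 2) (Fin 2) R) *
          !![A i * C i, A i * D i; B i * C i, B i * D i] =
            !![A i * C i, A i * D i; B i * C i, B i * D i]) ∧
      (!![a, b; 0, 0] : Matrix (Fin 2) (Fin 2) R) =
        ((List.range n).map
          (fun i => (!![A i * C i, A i * D i; B i * C i, B i * D i] :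
            Matrix (Fin 2) (Fin 2) R))).prod) := by
  constructor
  · intro H
    obtain ⟨n, hn, A, B, C, D, hA0, hC0, hB0, hCn, hDn, hone, hlink⟩ := H
    obtain ⟨m, rfl⟩ : ∃ m, n = m + 1 := ⟨n - 1, (Nat.succ_pred_eq_of_pos hn).symm⟩
    refine ⟨m + 1, hn, A, B, C, D, ?_, ?_⟩
    · intro i hi
      rw [Matrix.mul_fin_two, entry_helper (hone i hi), entry_helper (hone i hi),
        entry_helper (hone i hi), entry_helper (hone i hi)]
    · rw [prodE_formula]
      have hT : ((List.range m).map (fun i => C i * A (i+1) + D i * B (i+1))).prod = 1 := by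
        apply List.prod_eq_one
        intro x hx
        obtain ⟨i, hi, rfl⟩ := List.mem_map.1 hx
        exact hlink i (by simpa using List.mem_range.1 hi)
      have hm : m + 1 - 1 = m := rfl
      rw [hm] at hCn hDn
      rw [hT, hA0, hB0, hCn, hDn]
      norm_num
  · intro H
    obtain ⟨n, hn, A, B, C, D, hidem, hprod⟩ := H
    obtain ⟨m, rfl⟩ : ∃ m, n = m + 1 := ⟨n - 1, (Nat.succ_pred_eq_of_pos hn).symm⟩
    -- Step 1: each idempotent factor satisfies the unimodularity equation
    have hone : ∀ i < m + 1, C i * A i + D i * B i = 1 := by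
      intro i hi
      by_contra hne
      have hs : C i * A i + D i * B i - 1 ≠ 0 := sub_ne_zero.2 hne
      have h2 : (!![A i * C i * (A i * C i) + A i * D i * (B i * C i),
                    A i * C i * (A i * D i) + A i * D i * (B i * D i);
                    B i * C i * (A i * C i) + B i * D i * (B i * C i),
                    B i * C i * (A i * D i) + B i * D i * (B i * D i)] :
          Matrix (Fin 2) (Fin 2) R) = !![A i * C i, A i * D i; B i * C i, B i * D i] := by
        rw [← Matrix.mul_fin_two]; exact hidem i hi
      have e11 := Matrix.ext_iff.2 h2 0 0
      have e12 := Matrix.ext_iff.2 h2 0 1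
      have e21 := Matrix.ext_iff.2 h2 1 0
      have e22 := Matrix.ext_iff.2 h2 1 1
      simp only [Matrix.of_apply, Matrix.cons_val', Matrix.cons_val_zero, Matrix.cons_val_one,
        Matrix.head_cons, Matrix.empty_val', Matrix.cons_val_fin_one,
        Matrix.head_fin_const] at e11 e12 e21 e22
      have key : ∀ p q : R, p * C i * (A i * q) + p * D i * (B i * q) = p * q →
          p = 0 ∨ q = 0 := by
        intro p q hpq
        have hz : p * (C i * A i + D i * B i - 1) * q = 0 := by
          calc p * (C i * A i + D i * B i - 1) * q
              = (p * C i * (A i * q) + p * D i * (B i * q)) - p * q := by noncomm_ring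
          _ = 0 := by rw [hpq, sub_self]
        rcases mul_eq_zero.1 hz with hz1 | hz2
        · rcases mul_eq_zero.1 hz1 with hz3 | hz4
          · exact Or.inl hz3
          · exact absurd hz4 hs
        · exact Or.inr hz2
      have hAC := key (A i) (C i) e11
      have hAD := key (A i) (D i) e12
      have hBC := key (B i) (C i) e21
      have hBD := key (B i) (D i) e22
      have hE0 : (!![A i * C i, A i * D i; B i * C i, B i * D i] :
          Matrix (Fin 2) (Fin 2) R) = 0 := by
        rw [mul_eq_zero.2 hAC, mul_eq_zero.2 hAD, mul_eq_zero.2 hBC, mul_eq_zero.2 hBD]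
        ext j k
        fin_cases j <;> fin_cases k <;> simp
      have hmem : (0 : Matrix (Fin 2) (Fin 2) R) ∈
          (List.range (m + 1)).map (fun i => (!![A i * C i, A i * D i; B i * C i, B i * D i] :
            Matrix (Fin 2) (Fin 2) R)) := by
        rw [← hE0]
        exact List.mem_map.2 ⟨i, List.mem_range.2 hi, rfl⟩
      have hz := List.prod_eq_zero hmem
      rw [← hprod] at hz
      have h00 := Matrix.ext_iff.2 hz 0 0
      simp only [Matrix.cons_val', Matrix.cons_val_zero, Matrix.empty_val',
        Matrix.cons_val_fin_one, Matrix.zero_apply] at h00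
      exact ha h00
    -- Step 2: product formula
    rw [prodE_formula A B C D m] at hprod
    set t : ℕ → R := fun i => C i * A (i + 1) + D i * B (i + 1) with ht
    set T : R := ((List.range m).map t).prod with hTdef
    have ea := Matrix.ext_iff.2 hprod 0 0
    have eb := Matrix.ext_iff.2 hprod 0 1
    have e0c := Matrix.ext_iff.2 hprod 1 0
    have e0d := Matrix.ext_iff.2 hprod 1 1
    simp only [Matrix.of_apply, Matrix.cons_val', Matrix.cons_val_zero, Matrix.cons_val_one,
      Matrix.head_cons, Matrix.empty_val', Matrix.cons_val_fin_one,
      Matrix.head_fin_const] at ea eb e0c e0d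
    obtain ⟨x, y, hxy⟩ := hcomax
    set K : R := C m * x + D m * y with hK
    have huK : A 0 * (T * K) = 1 := by
      calc A 0 * (T * K) = (A 0 * T * C m) * x + (A 0 * T * D m) * y := by rw [hK]; noncomm_ring
      _ = a * x + b * y := by rw [← ea, ← eb]
      _ = 1 := hxy
    have hB0 : B 0 = 0 := by
      have h1 : B 0 * (T * K) = 0 := by
        calc B 0 * (T * K) = (B 0 * T * C m) * x + (B 0 * T * D m) * y := by rw [hK]; noncomm_ring
        _ = 0 := by rw [← e0c, ← e0d]; simp
      have hTK : T * K ≠ 0 := by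
        intro h
        rw [h, mul_zero] at huK
        exact zero_ne_one huK
      exact (mul_eq_zero.1 h1).resolve_right hTK
    have hC0A0 : C 0 * A 0 = 1 := by
      have h := hone 0 (Nat.succ_pos m)
      rwa [hB0, mul_zero, add_zero] at h
    have hA0C0 : A 0 * C 0 = 1 := inv_comm_of_domain hC0A0
    -- gauge facts
    have G : ∀ i ≤ m, (A 0 * ((List.range i).map t).prod) *
        ((((List.range' i (m - i)).map t).prod) * K) = 1 := by
      intro i hi
      have hsplit : ((List.range i).map t).prod * ((List.range' i (m - i)).map t).prod = T := by
        rw [← List.prod_append, ← List.map_append, List.range_eq_range' (n := i)]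
        have h := List.range'_append (s := 0) (m := i) (n := m - i) (step := 1)
        rw [zero_add, one_mul, Nat.add_sub_cancel' hi] at h
        rw [h, ← List.range_eq_range']
      calc (A 0 * ((List.range i).map t).prod) * ((((List.range' i (m - i)).map t).prod) * K)
          = A 0 * ((((List.range i).map t).prod * ((List.range' i (m - i)).map t).prod) * K) := by
            noncomm_ring
      _ = 1 := by rw [hsplit]; exact huK
    have Pstep : ∀ i : ℕ, ((List.range (i + 1)).map t).prod = ((List.range i).map t).prod * t i := by
      intro i
      rw [List.range_succ, List.map_append]
      simp
    refine ⟨m + 1, Nat.succ_pos m,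
      fun i => A i * ((((List.range' i (m - i)).map t).prod) * K),
      fun i => B i * ((((List.range' i (m - i)).map t).prod) * K),
      fun i => (A 0 * ((List.range i).map t).prod) * C i,
      fun i => (A 0 * ((List.range i).map t).prod) * D i, ?_, ?_, ?_, ?_, ?_, ?_, ?_⟩
    · simpa using G 0 (Nat.zero_le m)
    · simpa using hA0C0
    · show B 0 * ((((List.range' 0 (m - 0)).map t).prod) * K) = 0
      rw [hB0, zero_mul]
    · show (A 0 * ((List.range (m + 1 - 1)).map t).prod) * C (m + 1 - 1) = a
      rw [Nat.add_sub_cancel, ← hTdef]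
      exact ea.symm
    · show (A 0 * ((List.range (m + 1 - 1)).map t).prod) * D (m + 1 - 1) = b
      rw [Nat.add_sub_cancel, ← hTdef]
      exact eb.symm
    · intro i hi
      calc (A 0 * ((List.range i).map t).prod) * C i *
            (A i * ((((List.range' i (m - i)).map t).prod) * K)) +
          (A 0 * ((List.range i).map t).prod) * D i *
            (B i * ((((List.range' i (m - i)).map t).prod) * K))
          = (A 0 * ((List.range i).map t).prod) *
              ((C i * A i + D i * B i) * ((((List.range' i (m - i)).map t).prod) * K)) := by
            noncomm_ring
      _ = 1 := by rw [hone i hi, one_mul]; exact G i (Nat.lt_succ_iff.1 hi)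
    · intro i hi
      have him : i + 1 ≤ m := Nat.lt_succ_iff.1 hi
      have htir : C i * A (i + 1) + D i * B (i + 1) = t i := rfl
      calc (A 0 * ((List.range i).map t).prod) * C i *
            (A (i + 1) * ((((List.range' (i + 1) (m - (i + 1))).map t).prod) * K)) +
          (A 0 * ((List.range i).map t).prod) * D i *
            (B (i + 1) * ((((List.range' (i + 1) (m - (i + 1))).map t).prod) * K))
          = (A 0 * (((List.range i).map t).prod * (C i * A (i + 1) + D i * B (i + 1)))) *
              ((((List.range' (i + 1) (m - (i + 1))).map t).prod) * K) := by noncomm_ring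
      _ = (A 0 * ((List.range (i + 1)).map t).prod) *
              ((((List.range' (i + 1) (m - (i + 1))).map t).prod) * K) := by
            rw [htir, ← Pstep i]
      _ = 1 := G (i + 1) him
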